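/- Let c = (2^7 - 1)/5^4 = 127/625. For 0 ≤ r, v ≤ 1 and c ≤ t ≤ 1, we have ((1-v) + v t^(-1))^(-1) ≤ G_{r,v}(t), where G_{r,v}(t) = (v(t-1)/2)(r t^(v-1) + 2 - r) + 1. -/

import Mathlib

open Real

/-- Numeric fact: `exp (996/625) ≥ 625/127`. -/
lemma aux_exp_num : (625 : ℝ) / 127 ≤ Real.exp (996 / 625) := by
  have h := Real.sum_le_exp_of_nonneg (by norm_num : (0:ℝ) ≤ 996 / 625) 12
  refine le_trans ?_ h
  norm_num [Finset.sum_range_succ, Nat.factorial]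

/-- Numeric fact: `log t ≥ 2 (t - 1)` at `t = 127/625`. -/
lemma aux_log_num : -(996 / 625 : ℝ) ≤ Real.log (127 / 625) := by
  have h : Real.log (625 / 127) ≤ 996 / 625 :=
    (Real.log_le_iff_le_exp (by norm_num)).2 aux_exp_num
  have h2 : Real.log (127 / 625) = -Real.log (625 / 127) := by
    rw [← Real.log_inv]; norm_num
  rw [h2]; linarith

/-- Key analytic inequality: `(1 - x) * exp (2 x) ≤ 1 + x` for `x ≥ 0`. -/
lemma aux_keyA {x : ℝ} (hx : 0 ≤ x) : (1 - x) * Real.exp (2 * x) ≤ 1 + x := by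
  set F : ℝ → ℝ := fun y => 1 + y - (1 - y) * Real.exp (2 * y) with hF
  have hderiv : ∀ y : ℝ, HasDerivAt F (1 - (1 - 2 * y) * Real.exp (2 * y)) y := by
    intro y
    have hlin : HasDerivAt (fun z : ℝ => 2 * z) 2 y := by
      simpa using (hasDerivAt_id y).const_mul 2
    have h1 : HasDerivAt (fun z : ℝ => Real.exp (2 * z)) (Real.exp (2 * y) * 2) y := hlin.exp
    have h2 : HasDerivAt (fun z : ℝ => (1 - z) * Real.exp (2 * z))
        ((0 - 1) * Real.exp (2 * y) + (1 - y) * (Real.exp (2 * y) * 2)) y :=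
      (((hasDerivAt_const y (1:ℝ)).sub (hasDerivAt_id y))).mul h1
    have h3 : HasDerivAt F
        (0 + 1 - ((0 - 1) * Real.exp (2 * y) + (1 - y) * (Real.exp (2 * y) * 2))) y :=
      ((hasDerivAt_const y (1:ℝ)).add (hasDerivAt_id y)).sub h2
    convert h3 using 1
    ring
  have hmono : MonotoneOn F (Set.Ici (0:ℝ)) := by
    apply monotoneOn_of_deriv_nonneg (convex_Ici 0)
    · exact fun y _ => ((hderiv y).continuousAt).continuousWithinAt
    · exact fun y _ => (hderiv y).differentiableAt.differentiableWithinAt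
    · intro y _
      rw [(hderiv y).deriv]
      have h4 : (1 - 2 * y) * Real.exp (2 * y) ≤ 1 := by
        have h5 : -(2 * y) + 1 ≤ Real.exp (-(2 * y)) := Real.add_one_le_exp _
        have h6 : (-(2 * y) + 1) * Real.exp (2 * y) ≤ Real.exp (-(2 * y)) * Real.exp (2 * y) :=
          mul_le_mul_of_nonneg_right h5 (Real.exp_pos _).le
        rw [← Real.exp_add, neg_add_cancel, Real.exp_zero] at h6
        nlinarith
      linarith
  have h0 : F 0 = 0 := by simp [hF]
  have := hmono (Set.mem_Ici.2 le_rfl) (Set.mem_Ici.2 hx) hx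
  rw [h0] at this
  simp only [hF] at this
  linarith

/-- `log t ≥ 2 (t - 1)` for `127/625 ≤ t ≤ 1`, by concavity of `log`. -/
lemma aux_log_ge (t : ℝ) (ht0 : (127 : ℝ) / 625 ≤ t) (ht1 : t ≤ 1) :
    2 * (t - 1) ≤ Real.log t := by
  set a : ℝ := (1 - t) * (625 / 498) with ha
  set b : ℝ := (t - 127 / 625) * (625 / 498) with hb
  have ha0 : 0 ≤ a := mul_nonneg (by linarith) (by norm_num)
  have hb0 : 0 ≤ b := mul_nonneg (by linarith) (by norm_num)
  have hab : a + b = 1 := by rw [ha, hb]; ring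
  have hcomb : a * (127 / 625) + b * 1 = t := by rw [ha, hb]; ring
  have hconc := strictConcaveOn_log_Ioi.concaveOn.2 (x := (127/625 : ℝ)) (y := 1)
    (Set.mem_Ioi.2 (by norm_num)) (Set.mem_Ioi.2 one_pos) ha0 hb0 hab
  simp only [smul_eq_mul, Real.log_one, mul_zero, add_zero, hcomb] at hconc
  have hlc : -(996 / 625 : ℝ) ≤ Real.log (127 / 625) := aux_log_num
  have h1 : a * (-(996 / 625 : ℝ)) ≤ a * Real.log (127 / 625) :=
    mul_le_mul_of_nonneg_left hlc ha0
  have h2 : a * (-(996 / 625 : ℝ)) = 2 * (t - 1) := by rw [ha]; ring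
  linarith

theorem harmonic_le_Grv (t r v : ℝ) (hr0 : 0 ≤ r) (hr1 : r ≤ 1)
    (hv0 : 0 ≤ v) (hv1 : v ≤ 1) (ht0 : (127 : ℝ) / 625 ≤ t) (ht1 : t ≤ 1) :
    ((1 - v) + v * t⁻¹)⁻¹ ≤ v * (t - 1) / 2 * (r * t ^ (v - 1) + 2 - r) + 1 := by
  have htpos : (0:ℝ) < t := by linarith
  set A : ℝ := t ^ (v - 1) with hA
  set D : ℝ := (1 - v) * t + v with hD
  have hA1 : 1 ≤ A :=
    Real.one_le_rpow_of_pos_of_le_one_of_nonpos htpos ht1 (by linarith)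
  have hD0 : 0 < D := by nlinarith [mul_nonneg hv0 (sub_nonneg.2 ht1)]
  have hD1 : D ≤ 1 := by nlinarith [mul_nonneg (sub_nonneg.2 hv1) (sub_nonneg.2 ht1)]
  -- the key inequality A * D ≤ 2 - D
  have hK : A * D ≤ 2 - D := by
    set x : ℝ := (1 - v) * (1 - t) with hx
    have hx0 : 0 ≤ x := mul_nonneg (by linarith) (by linarith)
    have hDx : D = 1 - x := by rw [hD, hx]; ring
    have hlog : 2 * (t - 1) ≤ Real.log t := aux_log_ge t ht0 ht1
    have hAe : A = Real.exp ((v - 1) * Real.log t) := by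
      rw [hA, Real.rpow_def_of_pos htpos, mul_comm]
    have hexp : (v - 1) * Real.log t ≤ 2 * x := by nlinarith
    have hAle : A ≤ Real.exp (2 * x) := by
      rw [hAe]; exact Real.exp_le_exp.2 hexp
    have h1x : 0 ≤ 1 - x := by linarith [hDx ▸ hD0.le]
    calc A * D = A * (1 - x) := by rw [hDx]
      _ ≤ Real.exp (2 * x) * (1 - x) := mul_le_mul_of_nonneg_right hAle h1x
      _ ≤ 1 + x := by rw [mul_comm]; exact aux_keyA hx0
      _ = 2 - D := by rw [hDx]; ring
  -- rewrite the left-hand side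
  have hden : (1 - v) + v * t⁻¹ = D / t := by
    field_simp [hD]
    exact hD.symm
  rw [hden, inv_div, div_le_iff₀ hD0]
  -- algebraic conclusion
  have hADnn : 0 ≤ (A - 1) * D := mul_nonneg (by linarith) hD0.le
  have h2 : (r * A + 2 - r) * D ≤ 2 := by
    nlinarith [mul_le_mul_of_nonneg_right hr1 hADnn]
  nlinarith [mul_nonneg (mul_nonneg hv0 (sub_nonneg.2 ht1)) (sub_nonneg.2 h2)]
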